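/- There exists an absolute constant δ > 0 with the following property: for every totally real number field k of degree d ≥ 2 with real embeddings v₁, …, v_d : k → ℝ and every integer t with 1 ≤ t ≤ d, there exist t pairwise distinct elements θ₁, …, θ_t ∈ 𝓞_k such that for each i: v_i(θ_i) > 1, |v_j(θ_i)| < 1 for all j ≠ i, ℚ(θ_i) = k, and |N_{k/ℚ}(1 − θ_i)| < |Δ_k|^δ; and the element α = (1 − θ₁)⋯(1 − θ_t) satisfies v_j(α) < 0 for 1 ≤ j ≤ t and v_j(α) > 0 for t < j ≤ d. -/

import Mathlib

open NumberField

set_option maxHeartbeats 1000000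

open NumberField NumberField.InfinitePlace NumberField.mixedEmbedding Module MeasureTheory
open scoped NNReal ENNReal

theorem pisot_aux (K : Type) [Field K] [NumberField K]
    (hw : ∀ w : InfinitePlace K, IsReal w) (hd : 2 ≤ finrank ℚ K)
    (ψ : K →+* ℝ) :
    ∃ θ : 𝓞 K, 1 < ψ (θ : K) ∧
      (∀ w : InfinitePlace K, w ≠ InfinitePlace.mk (Complex.ofRealHom.comp ψ) →
        w (θ : K) < 1) ∧
      IntermediateField.adjoin ℚ {(θ : K)} = ⊤ ∧
      |((Algebra.norm ℚ (1 - (θ : K)) : ℚ) : ℝ)| < |(NumberField.discr K : ℝ)| ^ (4 : ℕ) := by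
  classical
  set w₀ : InfinitePlace K := InfinitePlace.mk (Complex.ofRealHom.comp ψ) with hw₀def
  have hw₀real : IsReal w₀ := hw w₀
  have hw₀apply : ∀ x : K, w₀ x = |ψ x| := by
    intro x
    rw [hw₀def, InfinitePlace.apply]
    simp [Complex.norm_real]
  -- number of complex/real places
  have hc : nrComplexPlaces K = 0 := by
    refine Fintype.card_eq_zero_iff.mpr ⟨fun w => ?_⟩
    exact (not_isComplex_iff_isReal.mpr (hw w.1)) w.2
  have hr : nrRealPlaces K = finrank ℚ K := by
    have := card_add_two_mul_card_eq_rank K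
    omega
  -- Minkowski bound computation
  set B : ℝ≥0 := NNReal.sqrt ‖NumberField.discr K‖₊ + 1 with hBdef
  have hmb : minkowskiBound K ↑1 = (NNReal.sqrt ‖NumberField.discr K‖₊ : ℝ≥0∞) *
      2 ^ (finrank ℚ K) := by
    rw [minkowskiBound, volume_fundamentalDomain_fractionalIdealLatticeBasis,
      volume_fundamentalDomain_latticeBasis, mixedEmbedding.finrank, hc]
    simp [FractionalIdeal.absNorm_one]
  have hB : minkowskiBound K ↑1 < convexBodyLTFactor K * B := by
    rw [hmb, convexBodyLTFactor, hc, hr]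
    rw [pow_zero, mul_one, ENNReal.coe_pow, mul_comm]
    refine ENNReal.mul_lt_mul_iff_right (by positivity) (by exact ENNReal.pow_ne_top ENNReal.ofNat_ne_top) |>.mpr ?_
    exact_mod_cast lt_add_one _
  -- the convex body
  have hvol : minkowskiBound K ↑1 <
      volume (convexBodyLT K (fun w ↦ if w = w₀ then B else 1)) := by
    rw [convexBodyLT_volume, ← Finset.prod_erase_mul _ _ (Finset.mem_univ w₀)]
    simp_rw [ite_pow, one_pow]
    rw [Finset.prod_ite_eq']
    simp_rw [Finset.notMem_erase, ite_false, mult, hw₀real, ite_true, one_mul, pow_one]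
    exact hB
  obtain ⟨a, h_nz, h_le⟩ := exists_ne_zero_mem_ringOfIntegers_lt K hvol
  have ha1 : ∀ w : InfinitePlace K, w ≠ w₀ → w (a : K) < 1 := by
    intro w hwne
    have := h_le w
    rwa [if_neg hwne] at this
  have haB : w₀ (a : K) < B := by
    have := h_le w₀
    rwa [if_pos rfl] at this
  have haK : (a : K) ≠ 0 := RingOfIntegers.coe_ne_zero_iff.mpr h_nz
  have hmult : ∀ w : InfinitePlace K, mult w = 1 := fun w => by rw [mult, if_pos (hw w)]
  have hcard : Fintype.card (InfinitePlace K) = finrank ℚ K := by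
    rw [card_eq_nrRealPlaces_add_nrComplexPlaces, hc, hr]
    omega
  -- |norm| of nonzero integer is at least 1
  have hnorm1 : ∀ x : 𝓞 K, x ≠ 0 → (1 : ℝ) ≤ |((Algebra.norm ℚ ((x : K)) : ℚ) : ℝ)| := by
    intro x hx
    have h := Int.one_le_abs (Algebra.norm_ne_zero_iff.mpr hx)
    rw [← Algebra.coe_norm_int]
    exact_mod_cast h
  have hprodnorm : ∀ x : 𝓞 K,
      ∏ w : InfinitePlace K, w (x : K) = |((Algebra.norm ℚ ((x : K)) : ℚ) : ℝ)| := by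
    intro x
    rw [← Rat.cast_abs, ← prod_eq_abs_norm]
    exact Finset.prod_congr rfl fun w _ => by rw [hmult, pow_one]
  -- `w₀ a` is larger than 1
  have hP1 : ∏ w ∈ Finset.univ.erase w₀, w (a : K) < 1 := by
    obtain ⟨w', hw'⟩ := Fintype.exists_ne_of_one_lt_card
      (by omega : 1 < Fintype.card (InfinitePlace K)) w₀
    have hmem : w' ∈ Finset.univ.erase w₀ := Finset.mem_erase.mpr ⟨hw', Finset.mem_univ _⟩
    rw [← Finset.mul_prod_erase (Finset.univ.erase w₀)
      (fun w : InfinitePlace K => w (a : K)) hmem]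
    have hrest : ∏ w ∈ (Finset.univ.erase w₀).erase w', w (a : K) ≤ 1 :=
      Finset.prod_le_one (fun w _ => (w.1).nonneg _)
        (fun w hwm => (ha1 w (Finset.ne_of_mem_erase (Finset.mem_of_mem_erase hwm))).le)
    have hrest0 : (0:ℝ) ≤ ∏ w ∈ (Finset.univ.erase w₀).erase w', w (a : K) :=
      Finset.prod_nonneg (fun w _ => (w.1).nonneg _)
    have hw'1 := ha1 w' hw'
    have hw'0 : (0:ℝ) ≤ w' (a : K) := (w'.1).nonneg _
    nlinarith
  have hw₀a : 1 < w₀ (a : K) := by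
    have h1 : (1:ℝ) ≤ w₀ (a : K) * ∏ w ∈ Finset.univ.erase w₀, w (a : K) := by
      rw [Finset.mul_prod_erase Finset.univ (fun w : InfinitePlace K => w (a : K))
        (Finset.mem_univ w₀), hprodnorm]
      exact hnorm1 a h_nz
    have hw₀pos : 0 < w₀ (a : K) := pos_iff.mpr haK
    nlinarith
  -- choose the sign
  have hψa : |ψ (a : K)| = w₀ (a : K) := (hw₀apply _).symm
  set θ : 𝓞 K := if 0 < ψ (a : K) then a else -a with hθdef
  have hθK : (θ : K) = if 0 < ψ (a : K) then (a : K) else -(a : K) := by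
    rw [hθdef]; split <;> simp
  have hθw : ∀ w : InfinitePlace K, w (θ : K) = w (a : K) := by
    intro w
    rw [hθK]; split
    · rfl
    · exact w.1.map_neg _
  have hθnz : θ ≠ 0 := by
    rw [hθdef]; split
    · exact h_nz
    · simpa using h_nz
  have hθψ : 1 < ψ (θ : K) := by
    rw [hθK]
    rcases lt_trichotomy 0 (ψ (a : K)) with h | h | h
    · rw [if_pos h]
      have := hw₀a; rw [← hψa, abs_of_pos h] at this; exact this
    · exfalso; rw [← hψa, ← h, abs_zero] at hw₀a; linarith
    · rw [if_neg (not_lt.mpr h.le), map_neg]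
      have := hw₀a; rw [← hψa, abs_of_neg h] at this; linarith
  have hθ1 : ∀ w : InfinitePlace K, w ≠ w₀ → w (θ : K) < 1 := fun w hwne =>
    (hθw w) ▸ ha1 w hwne
  have hθprim : IntermediateField.adjoin ℚ {(θ : K)} = ⊤ :=
    NumberField.is_primitive_element_of_infinitePlace_lt hθnz
      (fun w hwne => hθ1 w hwne) (Or.inl hw₀real)
  -- the norm bound
  set D : ℝ := |(NumberField.discr K : ℝ)| with hDdef
  have hD2 : (2:ℝ) < D := by
    have := abs_discr_gt_two (K := K) (by omega)
    rw [hDdef, ← Int.cast_abs]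
    exact_mod_cast this
  have hDge : (4 / 9 : ℝ) * (3 * Real.pi / 4) ^ finrank ℚ K ≤ D := by
    have := abs_discr_ge (K := K) (by omega)
    rw [hDdef, ← Int.cast_abs]
    exact_mod_cast this
  have hpi94 : (9/4 : ℝ) ≤ 3 * Real.pi / 4 := by nlinarith [Real.pi_gt_three]
  have hpow : ((9:ℝ)/4) ^ finrank ℚ K ≤ (3 * Real.pi / 4) ^ finrank ℚ K :=
    pow_le_pow_left₀ (by norm_num) hpi94 _
  have h94 : (9/4 : ℝ) ≤ D := by
    have h2 : ((9:ℝ)/4) ^ 2 ≤ ((9:ℝ)/4) ^ finrank ℚ K :=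
      pow_le_pow_right₀ (by norm_num) hd
    nlinarith
  have h2d : (2:ℝ) ^ finrank ℚ K ≤ (9/4) * D := by
    have h1 : (2:ℝ) ^ finrank ℚ K ≤ ((9:ℝ)/4) ^ finrank ℚ K :=
      pow_le_pow_left₀ (by norm_num) (by norm_num) _
    nlinarith
  have hsqrtD : Real.sqrt D ≤ D := by
    nlinarith [Real.sq_sqrt (by positivity : (0:ℝ) ≤ D), Real.sqrt_nonneg D]
  have hBR : ((B : ℝ≥0) : ℝ) = Real.sqrt D + 1 := by
    rw [hBdef]
    push_cast
    congr 2
  -- bound each factor of the norm of 1 - θ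
  have hfac : ∀ w : InfinitePlace K, w ((1:K) - (θ:K)) ≤ 1 + w (θ:K) := by
    intro w
    show w.1 ((1:K) - (θ:K)) ≤ 1 + w.1 (θ:K)
    have h1 := w.1.add_le 1 (-(θ:K))
    have h2 : w.1 (-(θ:K)) = w.1 (θ:K) := (w.1).map_neg _
    have h3 : w.1 (1:K) = 1 := (w.1).map_one
    rw [sub_eq_add_neg]
    rw [h2, h3] at h1
    exact h1
  have key : ∏ w : InfinitePlace K, w ((1:K) - (θ:K)) =
      |((Algebra.norm ℚ (1 - (θ : K)) : ℚ) : ℝ)| := by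
    have h := hprodnorm (1 - θ)
    simpa using h
  have hcarde : (Finset.univ.erase w₀).card ≤ finrank ℚ K := by
    have h := Finset.card_erase_of_mem (Finset.mem_univ w₀)
    rw [Finset.card_univ, hcard] at h
    omega
  have hbound : |((Algebra.norm ℚ (1 - (θ : K)) : ℚ) : ℝ)| ≤
      (1 + (B:ℝ)) * 2 ^ finrank ℚ K := by
    rw [← key, ← Finset.mul_prod_erase Finset.univ
      (fun w : InfinitePlace K => w ((1:K) - (θ:K))) (Finset.mem_univ w₀)]
    have h1 : w₀ ((1:K) - (θ:K)) ≤ 1 + (B:ℝ) := by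
      have h2 := hfac w₀
      have h3 := hθw w₀
      nlinarith [haB]
    have h2 : ∏ w ∈ Finset.univ.erase w₀, w ((1:K) - (θ:K)) ≤
        2 ^ (Finset.univ.erase w₀).card := by
      rw [← Finset.prod_const]
      refine Finset.prod_le_prod (fun w _ => (w.1).nonneg _) (fun w hwmem => ?_)
      have h3 := hfac w
      have h4 := hθw w
      have h5 := ha1 w (Finset.ne_of_mem_erase hwmem)
      nlinarith
    have h6 : (2:ℝ) ^ (Finset.univ.erase w₀).card ≤ 2 ^ finrank ℚ K :=
      pow_le_pow_right₀ one_le_two hcarde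
    have h7 : (0:ℝ) ≤ ∏ w ∈ Finset.univ.erase w₀, w ((1:K) - (θ:K)) :=
      Finset.prod_nonneg fun w _ => (w.1).nonneg _
    have h8 : (0:ℝ) ≤ w₀ ((1:K) - (θ:K)) := (w₀.1).nonneg _
    nlinarith
  have hfinal : |((Algebra.norm ℚ (1 - (θ : K)) : ℚ) : ℝ)| < D ^ (4:ℕ) := by
    have hp : (0:ℝ) < 2 ^ finrank ℚ K := by positivity
    have hs0 := Real.sqrt_nonneg D
    have e2 : 1 + (B:ℝ) ≤ 2 * D := by rw [hBR]; nlinarith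
    have e3 : (1 + (B:ℝ)) * 2 ^ finrank ℚ K ≤ (2*D) * ((9/4)*D) := by
      refine mul_le_mul e2 h2d hp.le (by nlinarith)
    have hDsq : (81/16 : ℝ) ≤ D^2 := by nlinarith
    have e5 : (2*D) * ((9/4)*D) < D ^ (4:ℕ) := by nlinarith [sq_nonneg D, sq_nonneg (D^2)]
    linarith [hbound]
  exact ⟨θ, hθψ, fun w hwne => hθ1 w hwne, hθprim, hfinal⟩


/-- There is an absolute `δ > 0` such that every totally real number field `k` of degree
`d ≥ 2` contains, for every `1 ≤ t ≤ d`, pairwise distinct Pisot numbers `θ₁, …, θ_t`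
(each generating `k` and with `|N_{k/ℚ}(1 − θ_i)| < |Δ_k|^δ`) such that
`α = (1 − θ₁)⋯(1 − θ_t)` is negative at the first `t` real places and positive at the rest. -/
theorem stmt_7 :
    ∃ δ : ℝ, 0 < δ ∧
      ∀ (k : Type) [Field k] [NumberField k],
        (∀ φ : k →+* ℂ, ∀ x : k, (φ x).im = 0) →
        2 ≤ Module.finrank ℚ k →
        ∀ (v : Fin (Module.finrank ℚ k) → (k →+* ℝ)), Function.Bijective v →
        ∀ t : ℕ, 1 ≤ t → ∀ (ht : t ≤ Module.finrank ℚ k),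
          ∃ θ : Fin t → 𝓞 k, Function.Injective θ ∧
            (∀ i : Fin t,
              1 < v (Fin.castLE ht i) (θ i : k) ∧
              (∀ j, j ≠ Fin.castLE ht i → |v j (θ i : k)| < 1) ∧
              IntermediateField.adjoin ℚ {(θ i : k)} = ⊤ ∧
              |((Algebra.norm ℚ (1 - (θ i : k)) : ℚ) : ℝ)| <
                |(NumberField.discr k : ℝ)| ^ δ) ∧
            (∀ j : Fin (Module.finrank ℚ k),
              ((j : ℕ) < t → v j (∏ i, (1 - (θ i : k))) < 0) ∧
              (t ≤ (j : ℕ) → 0 < v j (∏ i, (1 - (θ i : k))))) := by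
  refine ⟨4, by norm_num, ?_⟩
  intro k _ _ hreal hd v hv t ht1 ht
  -- all complex embeddings and infinite places are real
  have hφ : ∀ φ : k →+* ℂ, ComplexEmbedding.IsReal φ := by
    intro φ
    rw [ComplexEmbedding.isReal_iff]
    ext x
    rw [ComplexEmbedding.conjugate_coe_eq]
    exact Complex.conj_eq_iff_im.mpr (hreal φ x)
  have hw : ∀ w : InfinitePlace k, IsReal w := by
    intro w
    rw [← mk_embedding w, isReal_mk_iff]
    exact hφ _
  set W : Fin (finrank ℚ k) → InfinitePlace k :=
    fun j => InfinitePlace.mk (Complex.ofRealHom.comp (v j)) with hWdef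
  have hWapply : ∀ j x, W j x = |v j x| := by
    intro j x
    rw [hWdef, InfinitePlace.apply]
    simp
  have hconj : ∀ ψ : k →+* ℝ, ComplexEmbedding.conjugate (Complex.ofRealHom.comp ψ) =
      Complex.ofRealHom.comp ψ := by
    intro ψ
    ext x
    rw [ComplexEmbedding.conjugate_coe_eq]
    simp [Complex.conj_ofReal]
  have hWinj : Function.Injective W := by
    intro j₁ j₂ h
    rw [hWdef, InfinitePlace.mk_eq_iff] at h
    have hcomp : Complex.ofRealHom.comp (v j₁) = Complex.ofRealHom.comp (v j₂) := by
      rcases h with h | h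
      · exact h
      · rw [← hconj (v j₁)]; exact h
    have hv12 : v j₁ = v j₂ := by
      ext x
      have h1 : Complex.ofRealHom (v j₁ x) = Complex.ofRealHom (v j₂ x) := by
        have := congrArg (fun f : k →+* ℂ => f x) hcomp
        simpa using this
      exact Complex.ofReal_injective h1
    exact hv.1 hv12
  -- construct the Pisot numbers
  choose θ hθ1 hθ2 hθ3 hθ4 using fun i : Fin t =>
    pisot_aux k hw hd (v (Fin.castLE ht i))
  have hsmall : ∀ (i : Fin t) (j : Fin (finrank ℚ k)), j ≠ Fin.castLE ht i →
      |v j (θ i : k)| < 1 := by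
    intro i j hj
    rw [← hWapply]
    exact hθ2 i (W j) (fun hWeq => hj (hWinj hWeq))
  have hcast_inj : Function.Injective (Fin.castLE ht) := Fin.castLE_injective ht
  refine ⟨θ, ?_, ?_, ?_⟩
  · -- injectivity
    intro i₁ i₂ heq
    by_contra hne
    have h1 := hθ1 i₁
    rw [heq] at h1
    have h2 := hsmall i₂ (Fin.castLE ht i₁) (fun hc => hne (hcast_inj hc))
    rw [abs_lt] at h2
    linarith [h2.2]
  · -- per-element conditions
    intro i
    refine ⟨hθ1 i, hsmall i, hθ3 i, ?_⟩
    rw [show (4:ℝ) = ((4:ℕ):ℝ) by norm_num, Real.rpow_natCast]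
    exact hθ4 i
  · -- signs of the product
    intro j
    have hmap : v j (∏ i, (1 - (θ i : k))) = ∏ i, (1 - v j (θ i : k)) := by
      rw [map_prod]
      exact Finset.prod_congr rfl fun i _ => by rw [map_sub, map_one]
    constructor
    · intro hjt
      set i₀ : Fin t := ⟨(j : ℕ), hjt⟩ with hi₀def
      have hji₀ : Fin.castLE ht i₀ = j := by
        ext; simp [hi₀def]
      rw [hmap, ← Finset.mul_prod_erase Finset.univ
        (fun i : Fin t => 1 - v j (θ i : k)) (Finset.mem_univ i₀)]
      have hneg : 1 - v j (θ i₀ : k) < 0 := by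
        have := hθ1 i₀
        rw [hji₀] at this
        linarith
      have hpos : 0 < ∏ i ∈ Finset.univ.erase i₀, (1 - v j (θ i : k)) := by
        refine Finset.prod_pos fun i hi => ?_
        have hine : j ≠ Fin.castLE ht i := by
          intro hc
          have : i₀ = i := by ext; simp [hi₀def, hc]
          exact (Finset.ne_of_mem_erase hi) this.symm
        have := hsmall i j hine
        rw [abs_lt] at this
        linarith [this.2]
      exact mul_neg_of_neg_of_pos hneg hpos
    · intro hjt
      rw [hmap]
      refine Finset.prod_pos fun i _ => ?_
      have hine : j ≠ Fin.castLE ht i := by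
        intro hc
        have : (j : ℕ) = (i : ℕ) := by rw [hc]; simp
        omega
      have := hsmall i j hine
      rw [abs_lt] at this
      linarith [this.2]
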